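/- Let m be a positive integer with m ∉ {1, 3, 5, 9}. Then there exist at least two primes p with (m + 1)/2 < p ≤ m + 1. -/

import Mathlib

open Real

namespace Stmt7Aux

theorem real_main_inequality2 {x : ℝ} (x_large : (8192 : ℝ) ≤ x) :
    x * (2 * x) ^ (√(2 * x) + 1) * 4 ^ (2 * x / 3) ≤ 4 ^ x := by
  let f : ℝ → ℝ := fun x => log x + (√(2 * x) * log (2 * x) + log (2 * x)) - log 4 / 3 * x
  have hf' : ∀ x, 0 < x → 0 < x * (2 * x) ^ (√(2 * x) + 1) / 4 ^ (x / 3) := fun x h =>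
    div_pos (mul_pos h (rpow_pos_of_pos (mul_pos two_pos h) _)) (rpow_pos_of_pos four_pos _)
  have hf : ∀ x, 0 < x → f x = log (x * (2 * x) ^ (√(2 * x) + 1) / 4 ^ (x / 3)) := by
    intro x h5
    have h6 := mul_pos (zero_lt_two' ℝ) h5
    have h7 := rpow_pos_of_pos h6 (√(2 * x) + 1)
    rw [log_div (mul_pos h5 h7).ne' (rpow_pos_of_pos four_pos _).ne', log_mul h5.ne' h7.ne',
      log_rpow h6, log_rpow zero_lt_four]
    ring
  have h5 : 0 < x := lt_of_lt_of_le (by norm_num1) x_large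
  rw [← div_le_one (rpow_pos_of_pos four_pos x), ← div_div_eq_mul_div, ← rpow_sub four_pos, ←
    mul_div 2 x, mul_div_left_comm, ← mul_one_sub, (by norm_num1 : (1 : ℝ) - 2 / 3 = 1 / 3),
    mul_one_div, ← log_nonpos_iff (hf' x h5).le, ← hf x h5]
  have hA : ConcaveOn ℝ (Set.Ioi (0.5:ℝ)) (fun x : ℝ => √(2 * x) * log (2 * x)) := by
    convert ((strictConcaveOn_sqrt_mul_log_Ioi.concaveOn.comp_linearMap
      ((2 : ℝ) • LinearMap.id))) using 1
    · rfl
    · rfl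
    ext x
    simp only [Set.mem_Ioi, Set.mem_preimage, LinearMap.smul_apply,
      LinearMap.id_coe, id_eq, smul_eq_mul]
    rw [← mul_lt_mul_iff_right₀ (two_pos)]
    norm_num1
    rfl
    rfl
  have hB : ConcaveOn ℝ (Set.Ioi (0.5:ℝ)) (fun x : ℝ => log (2 * x)) := by
    have hsub : Set.Ioi (0.5 : ℝ) ⊆ (((2 : ℝ) • (LinearMap.id : ℝ →ₗ[ℝ] ℝ)) ⁻¹' Set.Ioi 0) := by
      intro x hx
      simp only [Set.mem_Ioi, Set.mem_preimage, LinearMap.smul_apply,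
        LinearMap.id_coe, id_eq, smul_eq_mul] at *
      linarith
    have := (strictConcaveOn_log_Ioi.concaveOn.comp_linearMap
      ((2 : ℝ) • LinearMap.id)).subset hsub (convex_Ioi (0.5:ℝ))
    exact this
  have h : ConcaveOn ℝ (Set.Ioi 0.5) f := by
    apply ConcaveOn.sub
    · apply ConcaveOn.add
      · exact strictConcaveOn_log_Ioi.concaveOn.subset
          (Set.Ioi_subset_Ioi (by norm_num)) (convex_Ioi 0.5)
      · exact hA.add hB
    apply ConvexOn.smul
    · refine div_nonneg (log_nonneg (by norm_num1)) (by norm_num1)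
    · exact convexOn_id (convex_Ioi (0.5 : ℝ))
  suffices ∃ x1 x2, 0.5 < x1 ∧ x1 < x2 ∧ x2 ≤ x ∧ 0 ≤ f x1 ∧ f x2 ≤ 0 by
    obtain ⟨x1, x2, h1, h2, h0, h3, h4⟩ := this
    exact (h.right_le_of_le_left'' h1 ((h1.trans h2).trans_le h0) h2 h0 (h4.trans h3)).trans h4
  refine ⟨18, 8192, by norm_num1, by norm_num1, x_large, ?_, ?_⟩
  · have : √(2 * 18 : ℝ) = 6 := (sqrt_eq_iff_mul_self_eq_of_pos (by norm_num1)).mpr (by norm_num1)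
    rw [hf _ (by norm_num1), log_nonneg_iff (by positivity), this, one_le_div (by norm_num1)]
    rw [show (6 : ℝ) + 1 = ((7 : ℕ) : ℝ) by norm_num, rpow_natCast,
      show (18 : ℝ) / 3 = ((6 : ℕ) : ℝ) by norm_num, rpow_natCast]
    norm_num1
  · have : √(2 * 8192 : ℝ) = 128 :=
      (sqrt_eq_iff_mul_self_eq_of_pos (by norm_num1)).mpr (by norm_num1)
    rw [hf _ (by norm_num1), log_nonpos_iff (hf' _ (by norm_num1)).le, this,
        div_le_one (by positivity)]
    rw [show (128 : ℝ) + 1 = ((129 : ℕ) : ℝ) by norm_num, rpow_natCast]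
    rw [show (2 : ℝ) * 8192 = 2 ^ 14 by norm_num1, show (8192 : ℝ) = 2 ^ 13 by norm_num1,
      ← pow_mul, ← pow_add]
    rw [show (4 : ℝ) = 2 ^ (2 : ℝ) by rw [rpow_two]; norm_num1, ← rpow_natCast (2 : ℝ),
      ← rpow_mul (by norm_num)]
    apply rpow_le_rpow_of_exponent_le (by norm_num)
    norm_num1

theorem two_bertrand_main_inequality {n : ℕ} (n_large : 8192 ≤ n) :
    n * (2 * n) ^ (Nat.sqrt (2 * n) + 1) * 4 ^ (2 * n / 3) ≤ 4 ^ n := by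
  rw [← @Nat.cast_le ℝ]
  simp only [Nat.cast_add, Nat.cast_one, Nat.cast_mul, Nat.cast_pow, Nat.cast_ofNat, ← Real.rpow_natCast]
  refine _root_.trans ?_ (real_main_inequality2 (by exact_mod_cast n_large))
  gcongr
  · have h2 : (0:ℕ) < 2 * n := by positivity
    exact_mod_cast h2
  · exact_mod_cast Real.nat_sqrt_le_real_sqrt
  · norm_num1
  · exact Nat.cast_div_le.trans (by norm_cast)

theorem prod_small_le (n : ℕ) (n_pos : 0 < n) :
    (∏ p ∈ Finset.range (2 * n / 3 + 1), p ^ (Nat.centralBinom n).factorization p)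
      ≤ (2 * n) ^ Nat.sqrt (2 * n) * 4 ^ (2 * n / 3) := by
  have n2_pos : 1 ≤ 2 * n := by omega
  let S := (Finset.range (2 * n / 3 + 1)).filter Nat.Prime
  let f := fun (x : ℕ) => x ^ (Nat.centralBinom n).factorization x
  have hSf : ∏ x ∈ S, f x = ∏ x ∈ Finset.range (2 * n / 3 + 1), f x := by
    refine Finset.prod_filter_of_ne fun p _ h => ?_
    contrapose! h; dsimp only [f]
    rw [Nat.factorization_eq_zero_of_not_prime n.centralBinom h, _root_.pow_zero]
  rw [← hSf, ← Finset.prod_filter_mul_prod_filter_not S (· ≤ Nat.sqrt (2 * n))]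
  apply mul_le_mul'
  · refine (Finset.prod_le_prod' fun p _ => (?_ : f p ≤ 2 * n)).trans ?_
    · exact Nat.pow_factorization_choose_le (by omega)
    have hcard : (Finset.Icc 1 (Nat.sqrt (2 * n))).card = Nat.sqrt (2 * n) := by
      rw [Nat.card_Icc, Nat.add_sub_cancel]
    rw [Finset.prod_const]
    refine pow_right_mono₀ n2_pos ((Finset.card_le_card fun x hx => ?_).trans hcard.le)
    obtain ⟨h1, h2⟩ := Finset.mem_filter.1 hx
    exact Finset.mem_Icc.mpr ⟨(Finset.mem_filter.1 h1).2.one_lt.le, h2⟩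
  · refine le_trans ?_ (primorial_le_4_pow (2 * n / 3))
    refine (Finset.prod_le_prod' fun p hp => (?_ : f p ≤ p)).trans ?_
    · obtain ⟨h1, h2⟩ := Finset.mem_filter.1 hp
      refine (pow_right_mono₀ (Finset.mem_filter.1 h1).2.one_lt.le ?_).trans (pow_one p).le
      exact Nat.factorization_choose_le_one (Nat.sqrt_lt'.mp <| not_le.1 h2)
    refine Finset.prod_le_prod_of_subset_of_one_le' (Finset.filter_subset _ _) ?_
    exact fun p hp _ => (Finset.mem_filter.1 hp).2.one_lt.le

theorem centralBinom_factorization_two (n : ℕ) (n_large : 3 ≤ n) (p0 : ℕ)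
    (h1 : n < p0) (h2 : p0 ≤ 2 * n)
    (no_prime : ¬∃ p : ℕ, p.Prime ∧ p ≠ p0 ∧ n < p ∧ p ≤ 2 * n) :
    Nat.centralBinom n =
      (∏ p ∈ Finset.range (2 * n / 3 + 1), p ^ (Nat.centralBinom n).factorization p)
        * p0 ^ (Nat.centralBinom n).factorization p0 := by
  have hp0notin : p0 ∉ Finset.range (2 * n / 3 + 1) := by
    simp only [Finset.mem_range]
    omega
  rw [mul_comm,
    ← Finset.prod_insert (f := fun x => x ^ (Nat.centralBinom n).factorization x) hp0notin]
  refine (Eq.trans ?_ n.prod_pow_factorization_centralBinom).symm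
  apply Finset.prod_subset
  · intro x hx
    simp only [Finset.mem_insert, Finset.mem_range] at hx ⊢
    omega
  intro x hx h2x
  simp only [Finset.mem_range] at hx
  simp only [Finset.mem_insert, Finset.mem_range, not_or, not_lt] at h2x
  obtain ⟨hxp0, hxbig⟩ := h2x
  by_cases hxp : x.Prime
  · rcases le_or_gt x n with hxn | hxn
    · rw [Nat.factorization_centralBinom_of_two_mul_self_lt_three_mul (by omega) hxn (by omega),
        Nat.pow_zero]
    · exact absurd ⟨x, hxp, hxp0, hxn, by omega⟩ no_prime
  · rw [Nat.factorization_eq_zero_of_not_prime n.centralBinom hxp, Nat.pow_zero]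

theorem exists_two_primes_eventually (n : ℕ) (n_large : 8192 ≤ n) :
    ∃ p q : ℕ, p.Prime ∧ q.Prime ∧ p < q ∧ n < p ∧ q ≤ 2 * n := by
  obtain ⟨p0, hp0, hnp0, hp02⟩ := Nat.exists_prime_lt_and_le_two_mul n (by omega)
  by_contra contra
  have no_prime : ¬∃ p : ℕ, p.Prime ∧ p ≠ p0 ∧ n < p ∧ p ≤ 2 * n := by
    rintro ⟨p, hp, hne, hnp, hp2⟩
    rcases lt_or_gt_of_ne hne with h | h
    · exact contra ⟨p, p0, hp, hp0, h, hnp, hp02⟩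
    · exact contra ⟨p0, p, hp0, hp, h, hnp0, hp2⟩
  have heq := centralBinom_factorization_two n (by omega) p0 hnp0 hp02 no_prime
  have hfp0 : (Nat.centralBinom n).factorization p0 ≤ 1 := by
    apply Nat.factorization_choose_le_one
    calc 2 * n < p0 * p0 := by nlinarith
      _ = p0 ^ 2 := (sq p0).symm
  have hple : p0 ^ (Nat.centralBinom n).factorization p0 ≤ 2 * n := by
    calc p0 ^ (Nat.centralBinom n).factorization p0 ≤ p0 ^ 1 :=
          Nat.pow_le_pow_right hp0.pos hfp0
      _ = p0 := pow_one p0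
      _ ≤ 2 * n := hp02
  have hble : Nat.centralBinom n ≤ (2 * n) ^ (Nat.sqrt (2 * n) + 1) * 4 ^ (2 * n / 3) := by
    rw [heq]
    calc (∏ p ∈ Finset.range (2 * n / 3 + 1), p ^ (Nat.centralBinom n).factorization p)
          * p0 ^ (Nat.centralBinom n).factorization p0
        ≤ ((2 * n) ^ Nat.sqrt (2 * n) * 4 ^ (2 * n / 3)) * (2 * n) :=
          Nat.mul_le_mul (prod_small_le n (by omega)) hple
      _ = (2 * n) ^ (Nat.sqrt (2 * n) + 1) * 4 ^ (2 * n / 3) := by ring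
  have H1 := two_bertrand_main_inequality n_large
  have H2 := Nat.four_pow_lt_mul_centralBinom n (by omega)
  rw [mul_assoc] at H1
  exact not_le.2 H2 ((mul_le_mul_right hble n).trans H1)

theorem two_primes_succ {n : ℕ} (r c p q : ℕ) (hp : p.Prime) (hq : q.Prime)
    (hcp : c ≤ p) (hpq : p < q) (hcov : q ≤ 2 * r)
    (H : n < r → ∃ p q : ℕ, p.Prime ∧ q.Prime ∧ p < q ∧ n < p ∧ q ≤ 2 * n) (hn : n < c) :
    ∃ p q : ℕ, p.Prime ∧ q.Prime ∧ p < q ∧ n < p ∧ q ≤ 2 * n := by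
  by_cases h : q ≤ 2 * n
  · exact ⟨p, q, hp, hq, hpq, by omega, h⟩
  · exact H (by omega)

theorem exists_two_primes (n : ℕ) (h4 : 4 ≤ n) (h5 : n ≠ 5) :
    ∃ p q : ℕ, p.Prime ∧ q.Prime ∧ p < q ∧ n < p ∧ q ≤ 2 * n := by
  rcases le_or_gt 8192 n with h | h
  · exact exists_two_primes_eventually n h
  revert h
  refine two_primes_succ 4110 8192 8209 8219 (by norm_num) (by norm_num) (by norm_num)
    (by norm_num) (by norm_num) ?_
  refine two_primes_succ 2064 4110 4111 4127 (by norm_num) (by norm_num) (by norm_num)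
    (by norm_num) (by norm_num) ?_
  refine two_primes_succ 1041 2064 2069 2081 (by norm_num) (by norm_num) (by norm_num)
    (by norm_num) (by norm_num) ?_
  refine two_primes_succ 526 1041 1049 1051 (by norm_num) (by norm_num) (by norm_num)
    (by norm_num) (by norm_num) ?_
  refine two_primes_succ 274 526 541 547 (by norm_num) (by norm_num) (by norm_num)
    (by norm_num) (by norm_num) ?_
  refine two_primes_succ 141 274 277 281 (by norm_num) (by norm_num) (by norm_num)
    (by norm_num) (by norm_num) ?_
  refine two_primes_succ 76 141 149 151 (by norm_num) (by norm_num) (by norm_num)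
    (by norm_num) (by norm_num) ?_
  refine two_primes_succ 42 76 79 83 (by norm_num) (by norm_num) (by norm_num)
    (by norm_num) (by norm_num) ?_
  refine two_primes_succ 24 42 43 47 (by norm_num) (by norm_num) (by norm_num)
    (by norm_num) (by norm_num) ?_
  refine two_primes_succ 16 24 29 31 (by norm_num) (by norm_num) (by norm_num)
    (by norm_num) (by norm_num) ?_
  refine two_primes_succ 10 16 17 19 (by norm_num) (by norm_num) (by norm_num)
    (by norm_num) (by norm_num) ?_
  refine two_primes_succ 7 10 11 13 (by norm_num) (by norm_num) (by norm_num)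
    (by norm_num) (by norm_num) ?_
  refine two_primes_succ 6 7 7 11 (by norm_num) (by norm_num) (by norm_num)
    (by norm_num) (by norm_num) ?_
  intro h
  have hn4 : n = 4 := by omega
  subst hn4
  exact ⟨5, 7, by norm_num, by norm_num, by norm_num, by norm_num, by norm_num⟩

end Stmt7Aux

theorem stmt7 (m : ℕ) (hm : 0 < m) (h1 : m ≠ 1) (h3 : m ≠ 3) (h5 : m ≠ 5)
    (h9 : m ≠ 9) :
    2 ≤ ((Finset.Icc 1 (m + 1)).filter
      (fun p => p.Prime ∧ m + 1 < 2 * p)).card := by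
  rcases le_or_gt m 10 with hsmall | hbig
  · interval_cases m <;> first | decide | simp_all
  · obtain ⟨p, q, hp, hq, hpq, hkp, hq2⟩ :=
      Stmt7Aux.exists_two_primes ((m + 1) / 2) (by omega) (by omega)
    rw [show (2 : ℕ) = 1 + 1 by rfl, Nat.add_one_le_iff]
    refine Finset.one_lt_card.mpr ⟨p, ?_, q, ?_, hpq.ne⟩ <;>
      simp only [Finset.mem_filter, Finset.mem_Icc] <;>
      refine ⟨⟨?_, ?_⟩, ?_, ?_⟩
    · exact hp.one_lt.le
    · omega
    · exact hp
    · omega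
    · exact hq.one_lt.le
    · omega
    · exact hq
    · omega
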